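/- Let P_L(l) be the m-uniform loose path of length l ≥ 1, with m ≥ 3. Then λ1(P_L(l)) < (m-1+√(m²+6m-7))/(2(m-1)). -/

import Mathlib

noncomputable section

open scoped Classical

/-- A finite hypergraph: a bundled finite vertex type together with a finite
set of edges, each edge being a finite set of vertices. -/
structure HG where
  V : Type
  fin : Fintype V
  dec : DecidableEq V
  E : Finset (Finset V)

attribute [instance] HG.fin HG.dec

namespace HG

/-- Adjacency matrix of an `m`-uniform hypergraph: entry `1/(m-1)` if the two
vertices are distinct and lie in a common edge, `0` otherwise. -/
def adjMatrix (m : ℕ) (H : HG) : Matrix H.V H.V ℝ := fun i j =>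
  if i ≠ j ∧ ∃ e ∈ H.E, i ∈ e ∧ j ∈ e then ((m : ℝ) - 1)⁻¹ else 0

/-- The spectral radius `λ₁(H)`: the largest (real) eigenvalue of the adjacency matrix. -/
def lam1 (m : ℕ) (H : HG) : ℝ :=
  sSup {t : ℝ | ∃ x : H.V → ℝ, x ≠ 0 ∧ (H.adjMatrix m).mulVec x = t • x}

/-- `H` is `m`-uniform: every edge has exactly `m` vertices. -/
def Uniform (H : HG) (m : ℕ) : Prop := ∀ e ∈ H.E, e.card = m

/-- `H` is linear: two distinct edges meet in at most one vertex. -/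
def Linear (H : HG) : Prop := ∀ e ∈ H.E, ∀ f ∈ H.E, e ≠ f → (e ∩ f).card ≤ 1

/-- The underlying (adjacency) simple graph of a hypergraph. -/
def toGraph (H : HG) : SimpleGraph H.V where
  Adj i j := i ≠ j ∧ ∃ e ∈ H.E, i ∈ e ∧ j ∈ e
  symm := ⟨by rintro i j ⟨hne, e, he, hi, hj⟩; exact ⟨hne.symm, e, he, hj, hi⟩⟩
  loopless := ⟨by rintro i ⟨hne, -⟩; exact hne rfl⟩

/-- Connectedness of a hypergraph. -/
def Connected (H : HG) : Prop := H.toGraph.Connected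

/-- Diameter: maximum distance between two vertices. -/
def diam (H : HG) : ℕ :=
  Finset.univ.sup fun u => Finset.univ.sup fun v => H.toGraph.dist u v

/-- Degree of a vertex: the number of edges containing it. -/
def degree (H : HG) (v : H.V) : ℕ := (H.E.filter fun e => v ∈ e).card

/-- A vertex is pendant if it lies in exactly one edge. -/
def PendantVertex (H : HG) (v : H.V) : Prop := H.degree v = 1

/-- An edge is pendant if it contains exactly one non-pendant vertex. -/
def PendantEdge (H : HG) (e : Finset H.V) : Prop :=
  e ∈ H.E ∧ (e.filter fun v => ¬ H.PendantVertex v).card = 1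

/-- A supertree: connected `m`-uniform linear hypergraph with `n - 1 = k (m-1)`. -/
def IsSupertree (m : ℕ) (H : HG) : Prop :=
  H.Uniform m ∧ H.Linear ∧ H.Connected ∧
    Fintype.card H.V = H.E.card * (m - 1) + 1

/-- A hypertree: a supertree each of whose edges has at most two non-pendant vertices. -/
def IsHypertree (m : ℕ) (H : HG) : Prop :=
  H.IsSupertree m ∧ ∀ e ∈ H.E, (e.filter fun v => ¬ H.PendantVertex v).card ≤ 2

/-- Isomorphism of hypergraphs. -/
def Iso (H K : HG) : Prop :=
  ∃ f : H.V ≃ K.V, ∀ e : Finset H.V, e ∈ H.E ↔ e.image f ∈ K.E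

/-- `X` is a Perron eigenvector of `H`: positive and an eigenvector for `λ₁`. -/
def IsPerron (m : ℕ) (H : HG) (X : H.V → ℝ) : Prop :=
  (∀ v, 0 < X v) ∧ (H.adjMatrix m).mulVec X = lam1 m H • X

/-- Cyclic successor on `Fin l`. -/
def cycNext (l : ℕ) (j : Fin l) : Fin l :=
  ⟨(j.val + 1) % l, Nat.mod_lt _ (lt_of_le_of_lt (Nat.zero_le _) j.isLt)⟩

/-- `e : Fin l → Finset H.V` is a loose cycle of length `l` in `H`:
consecutive edges meet in exactly one vertex, non-consecutive edges are disjoint. -/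
def IsLooseCycle (H : HG) (l : ℕ) (e : Fin l → Finset H.V) : Prop :=
  3 ≤ l ∧ (∀ i, e i ∈ H.E) ∧ Function.Injective e ∧
    ∀ i j : Fin l, i ≠ j →
      ((j = cycNext l i ∨ i = cycNext l j) → (e i ∩ e j).card = 1) ∧
      (¬(j = cycNext l i ∨ i = cycNext l j) → e i ∩ e j = ∅)

/-- The collection of (edge sets of) loose cycles contained in `H`. -/
def cycleSets (H : HG) : Set (Finset (Finset H.V)) :=
  {C | ∃ (l : ℕ) (e : Fin l → Finset H.V), H.IsLooseCycle l e ∧ C = Finset.univ.image e}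

/-- The `m`-th power hypergraph of the graph with vertex type `Vg` and edges
`{a i, b i}` for `i : Eg`: each edge is enlarged with `m - 2` new vertices. -/
def powerHG (m : ℕ) (Vg Eg : Type) [Fintype Vg] [DecidableEq Vg] [Fintype Eg] [DecidableEq Eg]
    (a b : Eg → Vg) : HG where
  V := Vg ⊕ Eg × Fin (m - 2)
  fin := inferInstance
  dec := inferInstance
  E := Finset.univ.image fun i : Eg =>
    ({Sum.inl (a i), Sum.inl (b i)} : Finset (Vg ⊕ Eg × Fin (m - 2))) ∪
      Finset.univ.image fun t : Fin (m - 2) => Sum.inr (i, t)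

/-- `H` is (isomorphic to) the `m`-th power hypergraph of some simple graph. -/
def IsPowerHG (m : ℕ) (H : HG) : Prop :=
  ∃ (N k : ℕ) (a b : Fin k → Fin N),
    (∀ i, a i ≠ b i) ∧
    (Function.Injective fun i => ({a i, b i} : Finset (Fin N))) ∧
    H.Iso (powerHG m (Fin N) (Fin k) a b)

/-- The `m`-uniform loose path of length `l`. -/
def loosePath (m l : ℕ) : HG :=
  powerHG m (Fin (l + 1)) (Fin l) (fun j => j.castSucc) (fun j => j.succ)

/-- The `m`-uniform hyperstar with `k` edges. -/
def hyperstar (m k : ℕ) : HG :=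
  powerHG m (Fin (k + 1)) (Fin k) (fun _ => 0) (fun i => i.succ)

/-- `T_d(c₂,…,c_d)`: the hypertree obtained from the loose path
`v₁ e₁ v₂ … v_d e_d v_{d+1}` by attaching `c i` pendant edges at `v_i`
(the path vertex of 0-based index `j` is `v_{j+1}`). -/
def Td (m d : ℕ) (c : ℕ → ℕ) : HG :=
  powerHG m
    (Fin (d + 1) ⊕ Σ j : Fin (d + 1), Fin (c (j.val + 1)))
    (Fin d ⊕ Σ j : Fin (d + 1), Fin (c (j.val + 1)))
    (Sum.elim (fun j => Sum.inl j.castSucc) fun x => Sum.inl x.1)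
    (Sum.elim (fun j => Sum.inl j.succ) fun x => Sum.inr x)

/-- `UC_l(c₁,…,c_l)`: the unicyclic hypergraph obtained from the loose cycle
`v₁ e₁ v₂ … v_l e_l v₁` by attaching `c i` pendant edges at `v_i`
(the cycle vertex of 0-based index `j` is `v_{j+1}`). -/
def UCl (m l : ℕ) (c : ℕ → ℕ) : HG :=
  powerHG m
    (Fin l ⊕ Σ j : Fin l, Fin (c (j.val + 1)))
    (Fin l ⊕ Σ j : Fin l, Fin (c (j.val + 1)))
    (Sum.elim (fun j => Sum.inl j) fun x => Sum.inl x.1)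
    (Sum.elim (fun j => Sum.inl (cycNext l j)) fun x => Sum.inr x)

/-- `U_lC(c₁ = a)`: obtained from `UC_l(c₁ = a)` by attaching one further pendant
edge at a pendant vertex of one of its `a` pendant edges. -/
def UlC (m l a : ℕ) : HG :=
  match l, a with
  | l' + 1, a' + 1 =>
    powerHG m (Fin (l' + 1) ⊕ Fin (a' + 1) ⊕ Unit) (Fin (l' + 1) ⊕ Fin (a' + 1) ⊕ Unit)
      (Sum.elim (fun j => Sum.inl j)
        (Sum.elim (fun _ => Sum.inl 0) fun _ => Sum.inr (Sum.inl 0)))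
      (Sum.elim (fun j => Sum.inl (cycNext (l' + 1) j))
        (Sum.elim (fun t => Sum.inr (Sum.inl t)) fun _ => Sum.inr (Sum.inr ())))
  | _, _ => ⟨PUnit, inferInstance, inferInstance, ∅⟩

/-- `BC(l₁)`: two loose 3-cycles glued at one common core vertex, with `l₁`
pendant edges attached at the identified core vertex. -/
def BC (m l1 : ℕ) : HG :=
  powerHG m (Unit ⊕ Fin 4 ⊕ Fin l1) (Fin 6 ⊕ Fin l1)
    (Sum.elim
      ![Sum.inl (), Sum.inr (Sum.inl 0), Sum.inr (Sum.inl 1),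
        Sum.inl (), Sum.inr (Sum.inl 2), Sum.inr (Sum.inl 3)]
      fun _ => Sum.inl ())
    (Sum.elim
      ![Sum.inr (Sum.inl 0), Sum.inr (Sum.inl 1), Sum.inl (),
        Sum.inr (Sum.inl 2), Sum.inr (Sum.inl 3), Sum.inl ()]
      fun t => Sum.inr (Sum.inr t))

/-- `B₂C(l₁,l₂)`: obtained from `BC(l₁)` by attaching `l₂` pendant edges at a
core vertex of degree 2 of one of its 3-cycles. -/
def B2C (m l1 l2 : ℕ) : HG :=
  powerHG m (Unit ⊕ Fin 4 ⊕ Fin l1 ⊕ Fin l2) (Fin 6 ⊕ Fin l1 ⊕ Fin l2)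
    (Sum.elim
      ![Sum.inl (), Sum.inr (Sum.inl 0), Sum.inr (Sum.inl 1),
        Sum.inl (), Sum.inr (Sum.inl 2), Sum.inr (Sum.inl 3)]
      (Sum.elim (fun _ => Sum.inl ()) fun _ => Sum.inr (Sum.inl 0)))
    (Sum.elim
      ![Sum.inr (Sum.inl 0), Sum.inr (Sum.inl 1), Sum.inl (),
        Sum.inr (Sum.inl 2), Sum.inr (Sum.inl 3), Sum.inl ()]
      (Sum.elim (fun t => Sum.inr (Sum.inr (Sum.inl t)))
        fun t => Sum.inr (Sum.inr (Sum.inr t))))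

/-- `T₁C(l₁,l₂,l₃,l₄)`: the tricyclic Type I hypergraph built on the theta graph
with cycles `v₁e₁v₂e₂v₃e₃v₁`, `v₁e₃v₃e₄v₄e₅v₁`, `v₁e₁v₂e₂v₃e₄v₄e₅v₁`
(here 0-based: `v₁ = 0, v₂ = 1, v₃ = 2, v₄ = 3`), together with `lᵢ` pendant
edges at `vᵢ`. -/
def T1C (m l1 l2 l3 l4 : ℕ) : HG :=
  powerHG m
    (Fin 4 ⊕ (Fin l1 ⊕ Fin l2 ⊕ Fin l3 ⊕ Fin l4))
    (Fin 5 ⊕ (Fin l1 ⊕ Fin l2 ⊕ Fin l3 ⊕ Fin l4))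
    (Sum.elim
      ![Sum.inl 0, Sum.inl 1, Sum.inl 2, Sum.inl 2, Sum.inl 3]
      (Sum.elim (fun _ => Sum.inl 0)
        (Sum.elim (fun _ => Sum.inl 1)
          (Sum.elim (fun _ => Sum.inl 2) fun _ => Sum.inl 3))))
    (Sum.elim
      ![Sum.inl 1, Sum.inl 2, Sum.inl 0, Sum.inl 3, Sum.inl 0]
      (Sum.elim (fun t => Sum.inr (Sum.inl t))
        (Sum.elim (fun t => Sum.inr (Sum.inr (Sum.inl t)))
          (Sum.elim (fun t => Sum.inr (Sum.inr (Sum.inr (Sum.inl t))))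
            fun t => Sum.inr (Sum.inr (Sum.inr (Sum.inr t)))))))

end HG

open Finset in
private lemma sum_ite_or_eq {s : Finset ℕ} {x y : ℕ} (hxy : x ≠ y) (hx : x ∈ s) (hy : y ∈ s)
    (f : ℕ → ℝ) : (∑ n ∈ s, if n = x ∨ n = y then f n else 0) = f x + f y := by
  have hcg : ∀ n ∈ s, (if n = x ∨ n = y then f n else 0)
      = (if n = x then f n else 0) + (if n = y then f n else 0) := by
    intro n _
    by_cases h1 : n = x <;> by_cases h2 : n = y <;> simp_all
  rw [Finset.sum_congr rfl hcg, Finset.sum_add_distrib,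
    Finset.sum_ite_eq' s x f, Finset.sum_ite_eq' s y f, if_pos hx, if_pos hy]

private lemma eig_le_of_weight {n : Type} [Fintype n] (M : Matrix n n ℝ)
    (hM : ∀ i j, 0 ≤ M i j) (w : n → ℝ) (hw : ∀ i, 0 < w i) (c : ℝ)
    (hc : ∀ i, M.mulVec w i ≤ c * w i) {t : ℝ} {x : n → ℝ} (hx : x ≠ 0)
    (hMx : M.mulVec x = t • x) : t ≤ c := by
  obtain ⟨j0, hj0⟩ : ∃ j, x j ≠ 0 := Function.ne_iff.mp hx
  haveI : Nonempty n := ⟨j0⟩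
  obtain ⟨i, -, hi⟩ := Finset.exists_max_image Finset.univ (fun i => |x i| / w i)
    Finset.univ_nonempty
  have hij0 := hi j0 (Finset.mem_univ _)
  have hxi : 0 < |x i| := by
    have h0 : 0 < |x j0| / w j0 := div_pos (abs_pos.mpr hj0) (hw j0)
    have h1 : 0 < |x i| / w i := lt_of_lt_of_le h0 hij0
    by_contra h
    push_neg at h
    have h2 : |x i| = 0 := le_antisymm h (abs_nonneg _)
    rw [h2, zero_div] at h1
    exact lt_irrefl _ h1
  have hmv : ∀ (v : n → ℝ) (i : n), M.mulVec v i = ∑ j, M i j * v j := fun v i => rfl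
  have hratio : ∀ j, |x j| ≤ w j * (|x i| / w i) := by
    intro j
    have h3 := hi j (Finset.mem_univ _)
    rw [div_le_iff₀ (hw j)] at h3
    linarith [h3]
  have hwine : w i ≠ 0 := (hw i).ne'
  have hkey : |t| * |x i| ≤ c * |x i| := by
    have h1 : M.mulVec x i = t * x i := by rw [hMx]; simp
    calc |t| * |x i| = |M.mulVec x i| := by rw [h1, abs_mul]
      _ = |∑ j, M i j * x j| := by rw [hmv]
      _ ≤ ∑ j, |M i j * x j| := Finset.abs_sum_le_sum_abs _ _
      _ = ∑ j, M i j * |x j| := by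
            refine Finset.sum_congr rfl fun j _ => ?_
            rw [abs_mul, abs_of_nonneg (hM i j)]
      _ ≤ ∑ j, M i j * (w j * (|x i| / w i)) :=
            Finset.sum_le_sum fun j _ => mul_le_mul_of_nonneg_left (hratio j) (hM i j)
      _ = (∑ j, M i j * w j) * (|x i| / w i) := by
            rw [Finset.sum_mul]; exact Finset.sum_congr rfl fun j _ => by ring
      _ = M.mulVec w i * (|x i| / w i) := by rw [hmv]
      _ ≤ (c * w i) * (|x i| / w i) :=
            mul_le_mul_of_nonneg_right (hc i) (div_nonneg (abs_nonneg _) (hw i).le)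
      _ = c * |x i| := by field_simp
  have habs : |t| ≤ c := le_of_mul_le_mul_right hkey hxi
  exact le_trans (le_abs_self t) habs


set_option maxHeartbeats 3200000 in
open HG in
/-- The spectral radius of the `m`-uniform loose path of length `l ≥ 1`
(`m ≥ 3`) is strictly smaller than `(m - 1 + √(m² + 6m - 7)) / (2(m-1))`
(the spectral radius of a loose cycle). -/
theorem loosePath_spectral_radius_lt
    (m l : ℕ) (hm : 3 ≤ m) (hl : 1 ≤ l) :
    lam1 m (loosePath m l) <
      ((m : ℝ) - 1 + Real.sqrt ((m : ℝ) ^ 2 + 6 * (m : ℝ) - 7)) /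
        (2 * ((m : ℝ) - 1)) := by
  classical
  have hm3 : (3:ℝ) ≤ (m:ℝ) := by exact_mod_cast hm
  have hl1 : (1:ℝ) ≤ (l:ℝ) := by exact_mod_cast hl
  obtain ⟨D, hD⟩ : ∃ D : ℝ, D = (m:ℝ) - 1 := ⟨_, rfl⟩
  have hD2 : 2 ≤ D := by rw [hD]; linarith
  have hD0 : 0 < D := by linarith
  have hD1 : 0 < D - 1 := by linarith
  obtain ⟨sq, hsq⟩ : ∃ s : ℝ, s = Real.sqrt (D^2 + 8*D) := ⟨_, rfl⟩
  have hs0 : 0 ≤ sq := hsq ▸ Real.sqrt_nonneg _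
  have hs2 : sq^2 = D^2 + 8*D := by rw [hsq]; exact Real.sq_sqrt (by positivity)
  have hsD : D < sq := by nlinarith
  obtain ⟨Λ, hΛ⟩ : ∃ L : ℝ, L = (D + sq)/2 := ⟨_, rfl⟩
  have hΛD : D < Λ := by rw [hΛ]; linarith
  have hΛ0 : 0 < Λ := lt_trans hD0 hΛD
  have hΛ2 : Λ^2 = D*Λ + 2*D := by rw [hΛ]; nlinarith [hs2]
  have hΛD2 : 0 < Λ - D + 2 := by linarith
  obtain ⟨A, hA⟩ : ∃ A : ℝ, A = ((l:ℝ)+2)^2/4 := ⟨_, rfl⟩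
  have hA0 : 0 ≤ A := by rw [hA]; positivity
  obtain ⟨ε, hε⟩ : ∃ e : ℝ, e = 1/(2*(A + 1)) := ⟨_, rfl⟩
  have hε0 : 0 < ε := by rw [hε]; positivity
  have hA1 : (0:ℝ) < A + 1 := by linarith
  have hεA : 4*ε*A < 2 := by
    have h1 : 4*ε*A*(A+1) = 2*A := by rw [hε]; field_simp; ring
    nlinarith [h1, hA1]
  obtain ⟨κs, hκs⟩ : ∃ k : ℝ, k = (D-1)/(Λ-D+2) := ⟨_, rfl⟩
  have hκs0 : 0 < κs := by rw [hκs]; exact div_pos hD1 hΛD2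
  have hκsΛ : (Λ - D + 2) * κs = D - 1 := by rw [hκs]; field_simp
  have hΛκ : Λ = 2 + 4*κs := by
    have h : (Λ-2)*(Λ-D+2) = 4*(D-1) := by linear_combination hΛ2
    have h3 : (Λ - 2) * (Λ-D+2) = (4*κs) * (Λ-D+2) := by linear_combination h - 4*hκsΛ
    have h4 := mul_right_cancel₀ (ne_of_gt hΛD2) h3
    linarith
  obtain ⟨κ, hκ⟩ : ∃ k : ℝ, k = κs + ε := ⟨_, rfl⟩
  have hκ0 : 0 < κ := by rw [hκ]; linarith
  obtain ⟨β, hβ⟩ : ∃ b : ℝ, b = κ/(D-1) := ⟨_, rfl⟩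
  have hβ0 : 0 < β := by rw [hβ]; exact div_pos hκ0 hD1
  have hκβ : (D-1)*β = κ := by rw [hβ]; field_simp
  have hβ1 : 1 < (Λ-D+2)*β := by
    have h1 : (Λ-D+2)*κ = (D-1) + (Λ-D+2)*ε := by rw [hκ]; linear_combination hκsΛ
    rw [hβ, ← mul_div_assoc, lt_div_iff₀ hD1, one_mul]
    linarith [h1, mul_pos hΛD2 hε0]
  -- the weight sequences
  obtain ⟨a, ha⟩ : ∃ a : ℕ → ℝ, ∀ n, a n = ((n:ℝ)+1)*((l:ℝ)+1-(n:ℝ)) := ⟨_, fun _ => rfl⟩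
  have ha_nonneg : ∀ n, n ≤ l + 1 → 0 ≤ a n := by
    intro n hn
    have h1 : (n:ℝ) ≤ (l:ℝ)+1 := by exact_mod_cast hn
    rw [ha]
    nlinarith [(Nat.cast_nonneg n : (0:ℝ) ≤ (n:ℝ))]
  have ha_pos : ∀ n, n ≤ l → 0 < a n := by
    intro n hn
    have h1 : (n:ℝ) ≤ (l:ℝ) := by exact_mod_cast hn
    rw [ha]
    nlinarith [(Nat.cast_nonneg n : (0:ℝ) ≤ (n:ℝ))]
  have ha_le : ∀ n, a n ≤ A := by
    intro n
    rw [ha, hA]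
    nlinarith [sq_nonneg ((l:ℝ) - 2*(n:ℝ))]
  have hrec : ∀ n, a n + a (n+2) = 2*a (n+1) - 2 := by
    intro n; rw [ha, ha, ha]; push_cast; ring
  have ha1 : a 1 = 2*a 0 - 2 := by rw [ha, ha]; push_cast; ring
  obtain ⟨b, hb⟩ : ∃ b : ℕ → ℝ, ∀ n, b n = β*(a n + a (n+1)) := ⟨_, fun _ => rfl⟩
  have hb_nonneg : ∀ n, n ≤ l → 0 ≤ b n := by
    intro n hn
    rw [hb]
    have := ha_nonneg n (by omega)
    have := ha_nonneg (n+1) (by omega)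
    exact mul_nonneg hβ0.le (by linarith)
  have hb_pos : ∀ n, n + 1 ≤ l → 0 < b n := by
    intro n hn
    rw [hb]
    have := ha_pos n (by omega)
    have := ha_pos (n+1) (by omega)
    exact mul_pos hβ0 (by linarith)
  -- core inequalities
  have hcore : ∀ n, (1+κ)*(2*a n - 2) + 2*κ*a n < Λ * a n := by
    intro n
    have h1 : 4*ε*a n ≤ 4*ε*A :=
      mul_le_mul_of_nonneg_left (ha_le n) (by linarith)
    have h2 : (1+κ)*(2*a n-2) + 2*κ*a n - Λ*a n = 4*ε*a n - 2 - 2*κ := by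
      rw [hΛκ, hκ]; ring
    linarith [hεA, hκ0]
  have hextra : ∀ n, n+1 ≤ l → a n + a (n+1) + (D-2)*b n < Λ * b n := by
    intro n hn
    have hsp : 0 < a n + a (n+1) := by
      have := ha_pos n (by omega); have := ha_pos (n+1) hn; linarith
    have h1 := mul_lt_mul_of_pos_right hβ1 hsp
    rw [hb]
    linarith [h1]
  -- cast facts
  have hm2 : 2 ≤ m := by omega
  have hDm2 : ((m-2:ℕ):ℝ) = D - 1 := by rw [Nat.cast_sub hm2, hD]; push_cast; ring
  -- adjacency characterization
  have hE : (loosePath m l).E = Finset.univ.image (fun k : Fin l =>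
      ({Sum.inl k.castSucc, Sum.inl k.succ} : Finset (Fin (l+1) ⊕ Fin l × Fin (m-2))) ∪
        Finset.univ.image (fun t : Fin (m-2) => Sum.inr (k, t))) := rfl
  have hadj : ∀ i j : Fin (l+1) ⊕ Fin l × Fin (m-2),
      (loosePath m l).adjMatrix m i j =
        if (i ≠ j ∧ ∃ k : Fin l,
            (i = Sum.inl k.castSucc ∨ i = Sum.inl k.succ ∨ ∃ t, i = Sum.inr (k, t)) ∧
            (j = Sum.inl k.castSucc ∨ j = Sum.inl k.succ ∨ ∃ t, j = Sum.inr (k, t)))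
          then D⁻¹ else 0 := by
    intro i j
    have hiff : (i ≠ j ∧ ∃ e ∈ (loosePath m l).E, i ∈ e ∧ j ∈ e) ↔
        (i ≠ j ∧ ∃ k : Fin l,
            (i = Sum.inl k.castSucc ∨ i = Sum.inl k.succ ∨ ∃ t, i = Sum.inr (k, t)) ∧
            (j = Sum.inl k.castSucc ∨ j = Sum.inl k.succ ∨ ∃ t, j = Sum.inr (k, t))) := by
      rw [hE]
      constructor
      · rintro ⟨hne, e, he, hie, hje⟩
        refine ⟨hne, ?_⟩
        obtain ⟨k, -, rfl⟩ := Finset.mem_image.mp he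
        refine ⟨k, ?_, ?_⟩
        · change i ∈ (_ : Finset (Fin (l+1) ⊕ Fin l × Fin (m-2))) at hie
          simp only [Finset.mem_union, Finset.mem_insert, Finset.mem_singleton,
            Finset.mem_image, Finset.mem_univ, true_and] at hie
          rcases hie with (h | h) | ⟨t, h⟩
          · exact Or.inl h
          · exact Or.inr (Or.inl h)
          · exact Or.inr (Or.inr ⟨t, h.symm⟩)
        · change j ∈ (_ : Finset (Fin (l+1) ⊕ Fin l × Fin (m-2))) at hje
          simp only [Finset.mem_union, Finset.mem_insert, Finset.mem_singleton,
            Finset.mem_image, Finset.mem_univ, true_and] at hje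
          rcases hje with (h | h) | ⟨t, h⟩
          · exact Or.inl h
          · exact Or.inr (Or.inl h)
          · exact Or.inr (Or.inr ⟨t, h.symm⟩)
      · rintro ⟨hne, k, hik, hjk⟩
        refine ⟨hne, _, Finset.mem_image_of_mem _ (Finset.mem_univ k), ?_, ?_⟩
        · change i ∈ (_ : Finset (Fin (l+1) ⊕ Fin l × Fin (m-2)))
          simp only [Finset.mem_union, Finset.mem_insert, Finset.mem_singleton,
            Finset.mem_image, Finset.mem_univ, true_and]
          rcases hik with h | h | ⟨t, h⟩
          · exact Or.inl (Or.inl h)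
          · exact Or.inl (Or.inr h)
          · exact Or.inr ⟨t, h.symm⟩
        · change j ∈ (_ : Finset (Fin (l+1) ⊕ Fin l × Fin (m-2)))
          simp only [Finset.mem_union, Finset.mem_insert, Finset.mem_singleton,
            Finset.mem_image, Finset.mem_univ, true_and]
          rcases hjk with h | h | ⟨t, h⟩
          · exact Or.inl (Or.inl h)
          · exact Or.inl (Or.inr h)
          · exact Or.inr ⟨t, h.symm⟩
    unfold HG.adjMatrix
    split_ifs with h1 h2 h2
    · rw [hD]
    · exact absurd (hiff.mp h1) h2
    · exact absurd (hiff.mpr h2) h1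
    · rfl
  have hMnn : ∀ i j : Fin (l+1) ⊕ Fin l × Fin (m-2), 0 ≤ (loosePath m l).adjMatrix m i j := by
    intro i j
    rw [hadj i j]
    split
    · exact inv_nonneg.mpr hD0.le
    · exact le_rfl
  have hmv : ∀ (u : (Fin (l+1) ⊕ Fin l × Fin (m-2)) → ℝ) (i : Fin (l+1) ⊕ Fin l × Fin (m-2)),
      Matrix.mulVec ((loosePath m l).adjMatrix m) u i
        = ∑ j : Fin (l+1) ⊕ Fin l × Fin (m-2), (loosePath m l).adjMatrix m i j * u j :=
    fun u i => rfl
  -- the weight function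
  obtain ⟨w, hw1, hw2⟩ : ∃ w : Fin (l+1) ⊕ Fin l × Fin (m-2) → ℝ,
      (∀ v : Fin (l+1), w (Sum.inl v) = a v.val) ∧
      (∀ p : Fin l × Fin (m-2), w (Sum.inr p) = b p.1.val) :=
    ⟨Sum.elim (fun v => a v.val) (fun p => b p.1.val), fun _ => rfl, fun _ => rfl⟩
  have hwpos : ∀ i, 0 < w i := by
    rintro (v | ⟨k, t⟩)
    · rw [hw1]; exact ha_pos _ (by omega)
    · rw [hw2]; exact hb_pos _ (by have := k.isLt; omega)
  have hinl : ∀ (v : Fin (l+1)) (k : Fin l),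
      ((Sum.inl v : Fin (l+1) ⊕ Fin l × Fin (m-2)) = Sum.inl k.castSucc ∨
        (Sum.inl v : Fin (l+1) ⊕ Fin l × Fin (m-2)) = Sum.inl k.succ ∨
        ∃ t, (Sum.inl v : Fin (l+1) ⊕ Fin l × Fin (m-2)) = Sum.inr (k, t)) →
      (v.val = k.val ∨ v.val = k.val + 1) := by
    rintro v k (h | h | ⟨t, h⟩)
    · left; rw [Sum.inl.inj h]; simp
    · right; rw [Sum.inl.inj h]; simp
    · exact absurd h (by simp)
  have hinr : ∀ (p : Fin l × Fin (m-2)) (k : Fin l),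
      ((Sum.inr p : Fin (l+1) ⊕ Fin l × Fin (m-2)) = Sum.inl k.castSucc ∨
        (Sum.inr p : Fin (l+1) ⊕ Fin l × Fin (m-2)) = Sum.inl k.succ ∨
        ∃ t, (Sum.inr p : Fin (l+1) ⊕ Fin l × Fin (m-2)) = Sum.inr (k, t)) →
      p.1 = k := by
    rintro p k (h | h | ⟨t, h⟩)
    · exact absurd h (by simp)
    · exact absurd h (by simp)
    · rw [Sum.inr.inj h]
  have hD_or : ∀ i j : Fin (l+1) ⊕ Fin l × Fin (m-2),
      ((loosePath m l).adjMatrix m i j = 0) ∨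
      ((loosePath m l).adjMatrix m i j = D⁻¹ ∧ i ≠ j ∧ ∃ k : Fin l,
        (i = Sum.inl k.castSucc ∨ i = Sum.inl k.succ ∨ ∃ t, i = Sum.inr (k, t)) ∧
        (j = Sum.inl k.castSucc ∨ j = Sum.inl k.succ ∨ ∃ t, j = Sum.inr (k, t))) := by
    intro i j
    rw [hadj]
    split_ifs with h
    · exact Or.inr ⟨rfl, h⟩
    · exact Or.inl rfl
  -- key bound on the weighted row sums
  have key : ∀ i, Matrix.mulVec ((loosePath m l).adjMatrix m) w i < (Λ/D) * w i := by
    have hfinish : ∀ (i : Fin (l+1) ⊕ Fin l × Fin (m-2)) (X : ℝ),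
        Matrix.mulVec ((loosePath m l).adjMatrix m) w i ≤ D⁻¹ * X → X < Λ * w i →
        Matrix.mulVec ((loosePath m l).adjMatrix m) w i < (Λ/D) * w i := by
      intro i X h1 h2
      have h3 : D⁻¹ * X < D⁻¹ * (Λ * w i) := by
        exact mul_lt_mul_of_pos_left h2 (inv_pos.mpr hD0)
      have h4 : D⁻¹ * (Λ * w i) = (Λ/D) * w i := by
        rw [div_eq_mul_inv]; ring
      linarith
    rintro (v | ⟨k, t⟩)
    · -- core vertex
      have hrow1 : ∀ u : Fin (l+1),
          (loosePath m l).adjMatrix m (Sum.inl v) (Sum.inl u) * w (Sum.inl u) ≤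
            D⁻¹ * (if u.val + 1 = v.val ∨ u.val = v.val + 1 then a u.val else 0) := by
        intro u
        rcases hD_or (Sum.inl v) (Sum.inl u) with h0 | ⟨hDq, hne, k, hik, hjk⟩
        · rw [h0, zero_mul]
          refine mul_nonneg (inv_nonneg.mpr hD0.le) ?_
          split
          · exact ha_nonneg _ (by omega)
          · exact le_rfl
        · rw [hDq, hw1]
          have e1 := hinl v k hik
          have e2 := hinl u k hjk
          have hvu : v.val ≠ u.val := fun hh => hne (by rw [show v = u from Fin.ext hh])
          rw [if_pos (show u.val + 1 = v.val ∨ u.val = v.val + 1 by omega)]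
      have hrow2 : ∀ p : Fin l × Fin (m-2),
          (loosePath m l).adjMatrix m (Sum.inl v) (Sum.inr p) * w (Sum.inr p) ≤
            D⁻¹ * (if p.1.val = v.val ∨ p.1.val + 1 = v.val then b p.1.val else 0) := by
        intro p
        rcases hD_or (Sum.inl v) (Sum.inr p) with h0 | ⟨hDq, hne, k, hik, hjk⟩
        · rw [h0, zero_mul]
          refine mul_nonneg (inv_nonneg.mpr hD0.le) ?_
          split
          · exact hb_nonneg _ (by have := p.1.isLt; omega)
          · exact le_rfl
        · rw [hDq, hw2]
          have e1 := hinl v k hik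
          have e2 := hinr p k hjk
          have e2' : p.1.val = k.val := by rw [e2]
          rw [if_pos (show p.1.val = v.val ∨ p.1.val + 1 = v.val by omega)]
      have hsum : Matrix.mulVec ((loosePath m l).adjMatrix m) w (Sum.inl v) ≤
          D⁻¹ * ((∑ n ∈ Finset.range (l+2), if n + 1 = v.val ∨ n = v.val + 1 then a n else 0)
            + (D-1) * (∑ n ∈ Finset.range (l+1), if n = v.val ∨ n + 1 = v.val then b n else 0)) := by
        rw [hmv, Fintype.sum_sum_type]
        have e1 : (∑ u : Fin (l+1),
            (loosePath m l).adjMatrix m (Sum.inl v) (Sum.inl u) * w (Sum.inl u)) ≤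
            D⁻¹ * (∑ n ∈ Finset.range (l+2), if n + 1 = v.val ∨ n = v.val + 1 then a n else 0) := by
          calc (∑ u : Fin (l+1),
              (loosePath m l).adjMatrix m (Sum.inl v) (Sum.inl u) * w (Sum.inl u))
              ≤ ∑ u : Fin (l+1), D⁻¹ * (if u.val + 1 = v.val ∨ u.val = v.val + 1 then a u.val else 0) :=
                Finset.sum_le_sum fun u _ => hrow1 u
            _ = D⁻¹ * ∑ u : Fin (l+1), (if u.val + 1 = v.val ∨ u.val = v.val + 1 then a u.val else 0) := by
                rw [Finset.mul_sum]
            _ = D⁻¹ * ∑ n ∈ Finset.range (l+1), (if n + 1 = v.val ∨ n = v.val + 1 then a n else 0) := by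
                rw [Fin.sum_univ_eq_sum_range (fun n => if n + 1 = v.val ∨ n = v.val + 1 then a n else 0) (l+1)]
            _ ≤ D⁻¹ * ∑ n ∈ Finset.range (l+2), (if n + 1 = v.val ∨ n = v.val + 1 then a n else 0) := by
                refine mul_le_mul_of_nonneg_left ?_ (inv_nonneg.mpr hD0.le)
                refine Finset.sum_le_sum_of_subset_of_nonneg
                  (Finset.range_subset_range.mpr (by omega)) ?_
                intro n hn _
                split
                · exact ha_nonneg n (by simp only [Finset.mem_range] at hn; omega)
                · exact le_rfl
        have e2 : (∑ p : Fin l × Fin (m-2),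
            (loosePath m l).adjMatrix m (Sum.inl v) (Sum.inr p) * w (Sum.inr p)) ≤
            D⁻¹ * ((D-1) * ∑ n ∈ Finset.range (l+1), (if n = v.val ∨ n + 1 = v.val then b n else 0)) := by
          calc (∑ p : Fin l × Fin (m-2),
              (loosePath m l).adjMatrix m (Sum.inl v) (Sum.inr p) * w (Sum.inr p))
              ≤ ∑ p : Fin l × Fin (m-2), D⁻¹ * (if p.1.val = v.val ∨ p.1.val + 1 = v.val then b p.1.val else 0) :=
                Finset.sum_le_sum fun p _ => hrow2 p
            _ = D⁻¹ * ∑ p : Fin l × Fin (m-2), (if p.1.val = v.val ∨ p.1.val + 1 = v.val then b p.1.val else 0) := by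
                rw [Finset.mul_sum]
            _ = D⁻¹ * ((D-1) * ∑ k' : Fin l, (if k'.val = v.val ∨ k'.val + 1 = v.val then b k'.val else 0)) := by
                congr 1
                rw [Fintype.sum_prod_type]
                simp only [Finset.sum_const, Finset.card_univ, Fintype.card_fin, nsmul_eq_mul,
                  hDm2]
                rw [← Finset.mul_sum]
            _ = D⁻¹ * ((D-1) * ∑ n ∈ Finset.range l, (if n = v.val ∨ n + 1 = v.val then b n else 0)) := by
                rw [Fin.sum_univ_eq_sum_range (fun n => if n = v.val ∨ n + 1 = v.val then b n else 0) l]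
            _ ≤ D⁻¹ * ((D-1) * ∑ n ∈ Finset.range (l+1), (if n = v.val ∨ n + 1 = v.val then b n else 0)) := by
                refine mul_le_mul_of_nonneg_left (mul_le_mul_of_nonneg_left ?_ hD1.le)
                  (inv_nonneg.mpr hD0.le)
                refine Finset.sum_le_sum_of_subset_of_nonneg
                  (Finset.range_subset_range.mpr (by omega)) ?_
                intro n hn _
                split
                · exact hb_nonneg n (by simp only [Finset.mem_range] at hn; omega)
                · exact le_rfl
        calc (∑ u : Fin (l+1),
            (loosePath m l).adjMatrix m (Sum.inl v) (Sum.inl u) * w (Sum.inl u))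
            + (∑ p : Fin l × Fin (m-2),
              (loosePath m l).adjMatrix m (Sum.inl v) (Sum.inr p) * w (Sum.inr p))
            ≤ _ + _ := add_le_add e1 e2
          _ = D⁻¹ * ((∑ n ∈ Finset.range (l+2), if n + 1 = v.val ∨ n = v.val + 1 then a n else 0)
            + (D-1) * (∑ n ∈ Finset.range (l+1), if n = v.val ∨ n + 1 = v.val then b n else 0)) := by
              ring
      refine hfinish _ _ hsum ?_
      rw [hw1]
      rcases hvj : v.val with _ | j'
      · -- v.val = 0
        have hT1 : (∑ n ∈ Finset.range (l+2), if n + 1 = 0 ∨ n = 0 + 1 then a n else 0) = a 1 := by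
          have hcg : ∀ n ∈ Finset.range (l+2), (if n + 1 = 0 ∨ n = 0 + 1 then a n else 0)
              = (if n = 1 then a n else 0) := by
            intro n _
            by_cases hn : n = 1 <;> simp [hn]
          rw [Finset.sum_congr rfl hcg, Finset.sum_ite_eq' (Finset.range (l+2)) 1 a,
            if_pos (by simp only [Finset.mem_range]; omega)]
        have hT2 : (∑ n ∈ Finset.range (l+1), if n = 0 ∨ n + 1 = 0 then b n else 0) = b 0 := by
          have hcg : ∀ n ∈ Finset.range (l+1), (if n = 0 ∨ n + 1 = 0 then b n else 0)
              = (if n = 0 then b n else 0) := by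
            intro n _
            by_cases hn : n = 0 <;> simp [hn]
          rw [Finset.sum_congr rfl hcg, Finset.sum_ite_eq' (Finset.range (l+1)) 0 b,
            if_pos (by simp only [Finset.mem_range]; omega)]
        rw [hT1, hT2]
        have hbb : (D-1)*b 0 = κ*(a 0 + a 1) := by
          rw [hb, ← hκβ]; ring
        rw [hbb, ha1]
        have h3 := hcore 0
        linarith [mul_pos hκ0 (ha_pos 0 (Nat.zero_le l))]
      · -- v.val = j'+1
        have hjlt : j' + 1 < l + 1 := by rw [← hvj]; exact v.isLt
        have hT1 : (∑ n ∈ Finset.range (l+2), if n + 1 = j' + 1 ∨ n = (j'+1) + 1 then a n else 0)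
            = a j' + a (j'+2) := by
          have hcg : ∀ n ∈ Finset.range (l+2), (if n + 1 = j' + 1 ∨ n = (j'+1) + 1 then a n else 0)
              = (if n = j' ∨ n = j'+2 then a n else 0) := by
            intro n _
            have hiff2 : (n + 1 = j' + 1 ∨ n = (j'+1) + 1) ↔ (n = j' ∨ n = j'+2) := by omega
            simp only [hiff2]
          rw [Finset.sum_congr rfl hcg]
          exact sum_ite_or_eq (by omega) (by simp only [Finset.mem_range]; omega)
            (by simp only [Finset.mem_range]; omega) a
        have hT2 : (∑ n ∈ Finset.range (l+1), if n = j' + 1 ∨ n + 1 = j' + 1 then b n else 0)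
            = b (j'+1) + b j' := by
          have hcg : ∀ n ∈ Finset.range (l+1), (if n = j' + 1 ∨ n + 1 = j' + 1 then b n else 0)
              = (if n = j'+1 ∨ n = j' then b n else 0) := by
            intro n _
            have hiff2 : (n = j' + 1 ∨ n + 1 = j' + 1) ↔ (n = j'+1 ∨ n = j') := by omega
            simp only [hiff2]
          rw [Finset.sum_congr rfl hcg]
          exact sum_ite_or_eq (by omega) (by simp only [Finset.mem_range]; omega)
            (by simp only [Finset.mem_range]; omega) b
        rw [hT1, hT2]
        have h1 : (D-1)*(b (j'+1) + b j') = κ*(a j' + 2*a (j'+1) + a (j'+2)) := by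
          rw [hb, hb, ← hκβ]; ring
        have h2 := hrec j'
        have h4 : κ*(a j' + a (j'+2)) = κ*(2*a (j'+1) - 2) := by rw [h2]
        have h3 := hcore (j'+1)
        rw [h1]
        linarith [h2, h3, h4]
    · -- extra vertex
      have hrow1 : ∀ u : Fin (l+1),
          (loosePath m l).adjMatrix m (Sum.inr (k, t)) (Sum.inl u) * w (Sum.inl u) ≤
            D⁻¹ * (if u.val = k.val ∨ u.val = k.val + 1 then a u.val else 0) := by
        intro u
        rcases hD_or (Sum.inr (k, t)) (Sum.inl u) with h0 | ⟨hDq, hne, k', hik, hjk⟩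
        · rw [h0, zero_mul]
          refine mul_nonneg (inv_nonneg.mpr hD0.le) ?_
          split
          · exact ha_nonneg _ (by omega)
          · exact le_rfl
        · rw [hDq, hw1]
          have e1 := hinr (k, t) k' hik
          have e1' : k.val = k'.val := by rw [show k = k' from e1]
          have e2 := hinl u k' hjk
          rw [if_pos (show u.val = k.val ∨ u.val = k.val + 1 by omega)]
      have hrow2 : ∀ p : Fin l × Fin (m-2),
          (loosePath m l).adjMatrix m (Sum.inr (k, t)) (Sum.inr p) * w (Sum.inr p) ≤
            D⁻¹ * (if p.1 = k ∧ p ≠ (k, t) then b p.1.val else 0) := by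
        intro p
        rcases hD_or (Sum.inr (k, t)) (Sum.inr p) with h0 | ⟨hDq, hne, k', hik, hjk⟩
        · rw [h0, zero_mul]
          refine mul_nonneg (inv_nonneg.mpr hD0.le) ?_
          split
          · exact hb_nonneg _ (by have := p.1.isLt; omega)
          · exact le_rfl
        · rw [hDq, hw2]
          have e1 := hinr (k, t) k' hik
          have e2 := hinr p k' hjk
          rw [if_pos (show p.1 = k ∧ p ≠ (k, t) from
            ⟨by rw [e2, ← e1], fun hh => hne (by rw [hh])⟩)]
      have e3 : (∑ p : Fin l × Fin (m-2), (if p.1 = k ∧ p ≠ (k, t) then b p.1.val else 0))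
          = (D-2) * b k.val := by
        rw [Fintype.sum_prod_type]
        have hpt : ∀ k' : Fin l, (∑ t' : Fin (m-2), if (k', t').1 = k ∧ (k', t') ≠ (k, t) then b (k', t').1.val else 0)
            = if k' = k then (D-2)*b k.val else 0 := by
          intro k'
          by_cases hk : k' = k
          · subst hk
            rw [if_pos rfl]
            have hcg : ∀ t' : Fin (m-2), (if (k', t').1 = k' ∧ (k', t') ≠ (k', t) then b (k', t').1.val else 0)
                = b k'.val - (if t' = t then b k'.val else 0) := by
              intro t'
              by_cases h : t' = t
              · subst h; simp
              · have hne : (k', t') ≠ (k', t) := by simp [Prod.ext_iff, h]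
                simp [h, hne]
            rw [Finset.sum_congr rfl (fun t' _ => hcg t'), Finset.sum_sub_distrib,
              Finset.sum_const, Finset.card_univ, Fintype.card_fin, nsmul_eq_mul,
              Finset.sum_ite_eq' Finset.univ t (fun _ => b k'.val), if_pos (Finset.mem_univ t),
              hDm2]
            ring
          · rw [if_neg hk]
            refine Finset.sum_eq_zero fun t' _ => ?_
            rw [if_neg]
            simp only [ne_eq, not_and]
            intro hcon
            exact absurd hcon hk
        rw [Finset.sum_congr rfl (fun k' _ => hpt k'),
          Finset.sum_ite_eq' Finset.univ k (fun _ => (D-2)*b k.val), if_pos (Finset.mem_univ k)]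
      have hsum : Matrix.mulVec ((loosePath m l).adjMatrix m) w (Sum.inr (k, t)) ≤
          D⁻¹ * ((a k.val + a (k.val+1)) + (D-2) * b k.val) := by
        rw [hmv, Fintype.sum_sum_type]
        have e1 : (∑ u : Fin (l+1),
            (loosePath m l).adjMatrix m (Sum.inr (k, t)) (Sum.inl u) * w (Sum.inl u)) ≤
            D⁻¹ * (a k.val + a (k.val+1)) := by
          calc (∑ u : Fin (l+1),
              (loosePath m l).adjMatrix m (Sum.inr (k, t)) (Sum.inl u) * w (Sum.inl u))
              ≤ ∑ u : Fin (l+1), D⁻¹ * (if u.val = k.val ∨ u.val = k.val + 1 then a u.val else 0) :=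
                Finset.sum_le_sum fun u _ => hrow1 u
            _ = D⁻¹ * ∑ u : Fin (l+1), (if u.val = k.val ∨ u.val = k.val + 1 then a u.val else 0) := by
                rw [Finset.mul_sum]
            _ = D⁻¹ * ∑ n ∈ Finset.range (l+1), (if n = k.val ∨ n = k.val + 1 then a n else 0) := by
                rw [Fin.sum_univ_eq_sum_range (fun n => if n = k.val ∨ n = k.val + 1 then a n else 0) (l+1)]
            _ = D⁻¹ * (a k.val + a (k.val+1)) := by
                rw [sum_ite_or_eq (by omega) (by simp only [Finset.mem_range]; have := k.isLt; omega)
                  (by simp only [Finset.mem_range]; have := k.isLt; omega) a]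
        have e2 : (∑ p : Fin l × Fin (m-2),
            (loosePath m l).adjMatrix m (Sum.inr (k, t)) (Sum.inr p) * w (Sum.inr p)) ≤
            D⁻¹ * ((D-2) * b k.val) := by
          calc (∑ p : Fin l × Fin (m-2),
              (loosePath m l).adjMatrix m (Sum.inr (k, t)) (Sum.inr p) * w (Sum.inr p))
              ≤ ∑ p : Fin l × Fin (m-2), D⁻¹ * (if p.1 = k ∧ p ≠ (k, t) then b p.1.val else 0) :=
                Finset.sum_le_sum fun p _ => hrow2 p
            _ = D⁻¹ * ∑ p : Fin l × Fin (m-2), (if p.1 = k ∧ p ≠ (k, t) then b p.1.val else 0) := by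
                rw [Finset.mul_sum]
            _ = D⁻¹ * ((D-2) * b k.val) := by rw [e3]
        calc (∑ u : Fin (l+1),
            (loosePath m l).adjMatrix m (Sum.inr (k, t)) (Sum.inl u) * w (Sum.inl u))
            + (∑ p : Fin l × Fin (m-2),
              (loosePath m l).adjMatrix m (Sum.inr (k, t)) (Sum.inr p) * w (Sum.inr p))
            ≤ _ + _ := add_le_add e1 e2
          _ = D⁻¹ * ((a k.val + a (k.val+1)) + (D-2) * b k.val) := by ring
      refine hfinish _ _ hsum ?_
      rw [hw2]
      exact hextra k.val (k.isLt)
  -- assemble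
  haveI hne : Nonempty (Fin (l+1) ⊕ Fin l × Fin (m-2)) := ⟨Sum.inl 0⟩
  obtain ⟨c, hc⟩ : ∃ c : ℝ, c = Finset.univ.sup' Finset.univ_nonempty
      (fun i : Fin (l+1) ⊕ Fin l × Fin (m-2) =>
        Matrix.mulVec ((loosePath m l).adjMatrix m) w i / w i) := ⟨_, rfl⟩
  have hcB : c < Λ/D := by
    rw [hc, Finset.sup'_lt_iff]
    intro i _
    rw [div_lt_iff₀ (hwpos i)]
    exact key i
  have hcw : ∀ i, Matrix.mulVec ((loosePath m l).adjMatrix m) w i ≤ c * w i := by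
    intro i
    have h1 := Finset.le_sup' (fun i : Fin (l+1) ⊕ Fin l × Fin (m-2) =>
        Matrix.mulVec ((loosePath m l).adjMatrix m) w i / w i) (Finset.mem_univ i)
    replace h1 : Matrix.mulVec ((loosePath m l).adjMatrix m) w i / w i ≤ c := by rw [hc]; exact h1
    rw [div_le_iff₀ (hwpos i)] at h1
    exact h1
  have hmvnn : 0 ≤ Matrix.mulVec ((loosePath m l).adjMatrix m) w (Sum.inl 0) := by
    rw [hmv]
    exact Finset.sum_nonneg fun j _ => mul_nonneg (hMnn _ _) (hwpos j).le
  have hc0 : 0 ≤ c := by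
    rw [hc]
    refine le_trans (div_nonneg hmvnn (hwpos (Sum.inl 0)).le) ?_
    exact Finset.le_sup' (fun i : Fin (l+1) ⊕ Fin l × Fin (m-2) =>
      Matrix.mulVec ((loosePath m l).adjMatrix m) w i / w i) (Finset.mem_univ (Sum.inl 0))
  have hRHS : ((m : ℝ) - 1 + Real.sqrt ((m : ℝ) ^ 2 + 6 * (m : ℝ) - 7)) /
        (2 * ((m : ℝ) - 1)) = Λ/D := by
    have harg : (m:ℝ)^2 + 6*(m:ℝ) - 7 = D^2 + 8*D := by rw [hD]; ring
    rw [harg, ← hsq, hΛ, hD, div_div]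
  rw [hRHS, HG.lam1]
  refine lt_of_le_of_lt (Real.sSup_le ?_ hc0) hcB
  rintro tv ⟨x, hx, hMx⟩
  exact eig_le_of_weight ((loosePath m l).adjMatrix m) hMnn w hwpos c hcw hx hMx
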